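/- Let D_1, D_2, …, D_t be semi-complete digraphs on pairwise disjoint vertex sets, and let D* be the semi-complete digraph obtained from their disjoint union by adding, for all 1 ≤ i < j ≤ t, every arc (u, v) with u ∈ V(D_i) and v ∈ V(D_j). Then ctw(D*) = max_{1 ≤ i ≤ t} ctw(D_i). In particular, for every integer c, ctw(D*) ≤ c if and only if ctw(D_i) ≤ c for all i. -/

import Mathlib

open Finset

variable {V : Type*} [Fintype V] [DecidableEq V]

/-- The set of the first `i` vertices in the vertex ordering `π`. -/
def prefixSet (π : V ≃ Fin (Fintype.card V)) (i : ℕ) : Finset V :=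
  Finset.univ.filter (fun v => (π v : ℕ) < i)

/-- The set of the last `n - i` vertices in the vertex ordering `π`. -/
def suffixSet (π : V ≃ Fin (Fintype.card V)) (i : ℕ) : Finset V :=
  Finset.univ.filter (fun v => i ≤ (π v : ℕ))

/-- The cut at position `i`: the arcs from outside the length-`i` prefix into the prefix. -/
def cutFinset (E : V → V → Prop) [DecidableRel E]
    (π : V ≃ Fin (Fintype.card V)) (i : ℕ) : Finset (V × V) :=
  Finset.univ.filter (fun p : V × V => E p.1 p.2 ∧ i ≤ (π p.1 : ℕ) ∧ (π p.2 : ℕ) < i)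

/-- The size of the cut at position `i`. -/
def cutSize (E : V → V → Prop) [DecidableRel E]
    (π : V ≃ Fin (Fintype.card V)) (i : ℕ) : ℕ :=
  (cutFinset E π i).card

/-- The width of a vertex ordering. -/
def widthOf (E : V → V → Prop) [DecidableRel E] (π : V ≃ Fin (Fintype.card V)) : ℕ :=
  (Finset.range (Fintype.card V + 1)).sup (cutSize E π)

/-- The cutwidth of a digraph. -/
noncomputable def cutwidth (E : V → V → Prop) [DecidableRel E] : ℕ :=
  sInf {w | ∃ π : V ≃ Fin (Fintype.card V), widthOf E π = w}

/-- The OLA-cost of a vertex ordering. -/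
def olaOf (E : V → V → Prop) [DecidableRel E] (π : V ≃ Fin (Fintype.card V)) : ℕ :=
  ∑ i ∈ Finset.range (Fintype.card V + 1), cutSize E π i

/-- The OLA-cost of a digraph. -/
noncomputable def ola (E : V → V → Prop) [DecidableRel E] : ℕ :=
  sInf {w | ∃ π : V ≃ Fin (Fintype.card V), olaOf E π = w}

/-- The cutwidth of the subdigraph induced by a set `X` of vertices. -/
noncomputable def cutwidthOn (E : V → V → Prop) [inst : DecidableRel E] (X : Finset V) : ℕ :=
  letI : DecidableRel (fun a b : {x // x ∈ X} => E a.1 b.1) := fun a b => inst a.1 b.1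
  cutwidth (fun a b : {x // x ∈ X} => E a.1 b.1)

/- ### Auxiliary lemmas -/

lemma mem_cutFinset {W : Type*} [Fintype W] [DecidableEq W] {E : W → W → Prop} [DecidableRel E]
    {π : W ≃ Fin (Fintype.card W)} {i : ℕ} {p : W × W} :
    p ∈ cutFinset E π i ↔ E p.1 p.2 ∧ i ≤ (π p.1 : ℕ) ∧ (π p.2 : ℕ) < i := by
  simp [cutFinset]

/-- A downward-closed finset of `Fin m` is an initial segment. -/
lemma lowerSet_fin {m : ℕ} (S : Finset (Fin m))
    (h : ∀ a b : Fin m, a ≤ b → b ∈ S → a ∈ S) (x : Fin m) : x ∈ S ↔ (x : ℕ) < S.card := by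
  constructor
  · intro hx
    have hsub : Finset.Iic x ⊆ S := fun b hb => h b x (Finset.mem_Iic.1 hb) hx
    have := Finset.card_le_card hsub
    rw [Fin.card_Iic] at this
    omega
  · intro hx
    by_contra hxS
    have hsub : S ⊆ Finset.Iio x := by
      intro b hb
      rw [Finset.mem_Iio]
      by_contra hbx
      exact hxS (h x b (le_of_not_gt hbx) hb)
    have := Finset.card_le_card hsub
    rw [Fin.card_Iio] at this
    omega

/-- Generic cut-comparison lemma. -/
lemma cutSize_le_cutSize {α β : Type*} [Fintype α] [DecidableEq α] [Fintype β] [DecidableEq β]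
    (E1 : α → α → Prop) [DecidableRel E1] (E2 : β → β → Prop) [DecidableRel E2]
    (π1 : α ≃ Fin (Fintype.card α)) (π2 : β ≃ Fin (Fintype.card β))
    (g : α → β) (hg : Function.Injective g)
    (hE : ∀ a b : α, E1 a b → E2 (g a) (g b))
    (i j : ℕ) (hpos : ∀ a : α, (π1 a : ℕ) < i ↔ (π2 (g a) : ℕ) < j) :
    cutSize E1 π1 i ≤ cutSize E2 π2 j := by
  show (cutFinset E1 π1 i).card ≤ (cutFinset E2 π2 j).card
  apply Finset.card_le_card_of_injOn (fun p => (g p.1, g p.2))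
  · intro p hp
    simp only [Finset.mem_coe] at hp ⊢
    rw [mem_cutFinset] at hp ⊢
    refine ⟨hE _ _ hp.1, ?_, (hpos p.2).1 hp.2.2⟩
    exact le_of_not_gt fun hlt => absurd ((hpos p.1).2 hlt) (not_lt.2 hp.2.1)
  · intro p _ q _ hpq
    exact Prod.ext (hg (congrArg Prod.fst hpq)) (hg (congrArg Prod.snd hpq))

/-- Restricting any ordering to an induced subdigraph does not increase the width. -/
lemma cutwidthOn_le_widthOf (E : V → V → Prop) [inst : DecidableRel E] (X : Finset V)
    (π : V ≃ Fin (Fintype.card V)) : cutwidthOn E X ≤ widthOf E π := by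
  classical
  letI : DecidableRel (fun a b : {x // x ∈ X} => E a.1 b.1) := fun a b => inst a.1 b.1
  letI lo : LinearOrder {x // x ∈ X} :=
    LinearOrder.lift' (fun a => π a.1) (fun a b h => Subtype.ext (π.injective h))
  let σo : {x // x ∈ X} ≃o Fin (Fintype.card {x // x ∈ X}) := (monoEquivOfFin _ rfl).symm
  have hlt : ∀ a b : {x // x ∈ X}, a < b ↔ (π a.1 : ℕ) < (π b.1 : ℕ) := fun a b => Iff.rfl
  have h1 : cutwidth (fun a b : {x // x ∈ X} => E a.1 b.1) ≤
      widthOf (fun a b : {x // x ∈ X} => E a.1 b.1) σo.toEquiv :=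
    Nat.sInf_le ⟨σo.toEquiv, rfl⟩
  have h2 : widthOf (fun a b : {x // x ∈ X} => E a.1 b.1) σo.toEquiv ≤ widthOf E π := by
    apply Finset.sup_le
    intro j hj
    by_cases hj' : j < Fintype.card {x // x ∈ X}
    · refine le_trans (cutSize_le_cutSize _ E σo.toEquiv π Subtype.val Subtype.val_injective
        (fun a b h => h) j ((π (σo.symm ⟨j, hj'⟩).1 : ℕ)) ?_) (Finset.le_sup ?_)
      · intro a
        have e1 : (σo.toEquiv a : ℕ) < j ↔ σo a < σo (σo.symm ⟨j, hj'⟩) := by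
          rw [OrderIso.apply_symm_apply]
          exact Iff.symm (Fin.lt_def)
        rw [e1, σo.lt_iff_lt, hlt]
      · exact Finset.mem_range.2 (Nat.lt_succ_of_lt (Fin.is_lt _))
    · refine le_trans (cutSize_le_cutSize _ E σo.toEquiv π Subtype.val Subtype.val_injective
        (fun a b h => h) j (Fintype.card V) ?_) (Finset.le_sup ?_)
      · intro a
        constructor
        · intro _; exact (π a.1).isLt
        · intro _; exact lt_of_lt_of_le (σo.toEquiv a).isLt (le_of_not_gt hj')
      · exact Finset.mem_range.2 (Nat.lt_succ_self _)
  unfold cutwidthOn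
  exact le_trans h1 h2

lemma cutwidth_le_sup {t : ℕ} (E : V → V → Prop) [inst : DecidableRel E] (f : V → Fin t)
    (hcross : ∀ u v : V, f u < f v → ¬ E v u)
    (X : Fin t → Finset V) (hX : ∀ (i : Fin t) (v : V), v ∈ X i ↔ f v = i) :
    cutwidth E ≤ Finset.univ.sup (fun i : Fin t => cutwidthOn E (X i)) := by
  classical
  letI instr : ∀ i : Fin t, DecidableRel (fun a b : {x // x ∈ X i} => E a.1 b.1) :=
    fun i a b => inst a.1 b.1
  have hne : ∀ i : Fin t, ∃ σ : {x // x ∈ X i} ≃ Fin (Fintype.card {x // x ∈ X i}),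
      widthOf (fun a b : {x // x ∈ X i} => E a.1 b.1) σ = cutwidthOn E (X i) := by
    intro i
    have h := Nat.sInf_mem (s := {w | ∃ σ' : {x // x ∈ X i} ≃ Fin (Fintype.card {x // x ∈ X i}),
      widthOf (fun a b : {x // x ∈ X i} => E a.1 b.1) σ' = w})
      ⟨_, ⟨Fintype.equivFin _, rfl⟩⟩
    exact h
  choose σ hσ using hne
  have hmemX : ∀ v : V, v ∈ X (f v) := fun v => (hX (f v) v).2 rfl
  let key : V → Lex (Fin t × ℕ) := fun v => toLex (f v, (σ (f v) ⟨v, hmemX v⟩ : ℕ))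
  have hkey : ∀ v : V, key v = toLex (f v, (σ (f v) ⟨v, hmemX v⟩ : ℕ)) := fun _ => rfl
  have keyvalX : ∀ (i : Fin t) (v : V) (hv : v ∈ X i), key v = toLex (i, (σ i ⟨v, hv⟩ : ℕ)) := by
    intro i v hv
    have hfv : f v = i := (hX i v).1 hv
    subst hfv
    rfl
  have keyinj : Function.Injective key := by
    intro u v h
    have h1 : f u = f v := congrArg (fun x => (ofLex x).1) h
    have hv' : v ∈ X (f u) := by rw [h1]; exact hmemX v
    rw [keyvalX (f u) u (hmemX u), keyvalX (f u) v hv'] at h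
    have h2 : ((σ (f u) ⟨u, hmemX u⟩ : Fin _) : ℕ) = ((σ (f u) ⟨v, hv'⟩ : Fin _) : ℕ) :=
      congrArg (fun x => (ofLex x).2) h
    have h3 : (⟨u, hmemX u⟩ : {x // x ∈ X (f u)}) = ⟨v, hv'⟩ :=
      (σ (f u)).injective (Fin.val_injective h2)
    exact congrArg Subtype.val h3
  letI lo : LinearOrder V := LinearOrder.lift' key keyinj
  let πo : V ≃o Fin (Fintype.card V) := (monoEquivOfFin V rfl).symm
  let π : V ≃ Fin (Fintype.card V) := πo.toEquiv
  have hπlt : ∀ u v : V, (π u : ℕ) < (π v : ℕ) ↔ key u < key v := by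
    intro u v
    rw [← Fin.lt_def]
    exact πo.lt_iff_lt
  have P1 : ∀ u v : V, f u < f v → (π u : ℕ) < (π v : ℕ) := by
    intro u v h
    rw [hπlt, hkey u, hkey v, Prod.Lex.lt_iff]
    exact Or.inl h
  have P2 : ∀ (k : Fin t) (w w' : {x // x ∈ X k}),
      (π w.1 : ℕ) < (π w'.1 : ℕ) ↔ (σ k w : ℕ) < (σ k w' : ℕ) := by
    intro k w w'
    rw [hπlt, keyvalX k w.1 w.2, keyvalX k w'.1 w'.2, Prod.Lex.lt_iff]
    simp
  have hwidth : widthOf E π ≤ Finset.univ.sup (fun i : Fin t => cutwidthOn E (X i)) := by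
    apply Finset.sup_le
    intro pos _
    rcases Finset.eq_empty_or_nonempty (cutFinset E π pos) with he | ⟨⟨u₀, v₀⟩, hmem⟩
    · simp [cutSize, he]
    · rw [mem_cutFinset] at hmem
      obtain ⟨hE0, hu0, hv0⟩ := hmem
      replace hE0 : E u₀ v₀ := hE0
      replace hu0 : pos ≤ (π u₀ : ℕ) := hu0
      replace hv0 : (π v₀ : ℕ) < pos := hv0
      set k := f u₀ with hk
      have same : ∀ u v : V, E u v → pos ≤ (π u : ℕ) → (π v : ℕ) < pos → f u = f v := by
        intro u v hE hu hv
        rcases lt_trichotomy (f u) (f v) with h | h | h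
        · have := P1 u v h; omega
        · exact h
        · exact absurd hE (hcross v u h)
      have h00 : f v₀ = k := (same u₀ v₀ hE0 hu0 hv0).symm
      have hclass : ∀ u v : V, E u v → pos ≤ (π u : ℕ) → (π v : ℕ) < pos →
          f u = k ∧ f v = k := by
        intro u v hE hu hv
        have h1 := same u v hE hu hv
        rcases lt_trichotomy (f u) k with h | h | h
        · have : f u < f v₀ := by rw [h00]; exact h
          have := P1 u v₀ this
          omega
        · exact ⟨h, by rw [← h1]; exact h⟩
        · have : f u₀ < f v := by rw [← h1, ← hk]; exact h
          have := P1 u₀ v this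
          omega
      set T : Finset {x // x ∈ X k} := Finset.univ.filter (fun w => (π w.1 : ℕ) < pos) with hT
      set j := T.card with hjdef
      have hiff : ∀ w : {x // x ∈ X k}, (π w.1 : ℕ) < pos ↔ (σ k w : ℕ) < j := by
        intro w
        set S : Finset (Fin (Fintype.card {x // x ∈ X k})) := T.image (σ k) with hS
        have hcard : S.card = j := Finset.card_image_of_injective _ (σ k).injective
        have hdc : ∀ a b, a ≤ b → b ∈ S → a ∈ S := by
          intro a b hab hb
          rw [hS, Finset.mem_image] at hb ⊢
          obtain ⟨w', hw', hw'2⟩ := hb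
          refine ⟨(σ k).symm a, ?_, (σ k).apply_symm_apply a⟩
          rw [hT, Finset.mem_filter] at hw' ⊢
          refine ⟨Finset.mem_univ _, ?_⟩
          rcases eq_or_lt_of_le hab with rfl | hab'
          · rw [← hw'2, (σ k).symm_apply_apply]; exact hw'.2
          · have hv : ((σ k ((σ k).symm a) : Fin _) : ℕ) < ((σ k w' : Fin _) : ℕ) := by
              rw [(σ k).apply_symm_apply, hw'2]
              exact hab'
            have := (P2 k ((σ k).symm a) w').2 hv
            have := hw'.2
            omega
        constructor
        · intro h
          have hw : w ∈ T := by rw [hT, Finset.mem_filter]; exact ⟨Finset.mem_univ _, h⟩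
          have hin : σ k w ∈ S := by rw [hS]; exact Finset.mem_image_of_mem _ hw
          rw [lowerSet_fin S hdc, hcard] at hin
          exact hin
        · intro h
          have hin : σ k w ∈ S := by rw [lowerSet_fin S hdc, hcard]; exact h
          rw [hS, Finset.mem_image] at hin
          obtain ⟨w', hw', he⟩ := hin
          have : w' = w := (σ k).injective he
          subst this
          rw [hT, Finset.mem_filter] at hw'
          exact hw'.2
      have hj_le : j ≤ Fintype.card {x // x ∈ X k} := by
        rw [hjdef, hT]
        exact le_trans (Finset.card_filter_le _ _) (by simp)
      have hu0X : u₀ ∈ X k := (hX k u₀).2 rfl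
      have hcut : cutSize E π pos ≤ cutSize (fun a b : {x // x ∈ X k} => E a.1 b.1) (σ k) j := by
        show (cutFinset E π pos).card ≤ _
        apply Finset.card_le_card_of_injOn
          (fun p => if h : p.1 ∈ X k ∧ p.2 ∈ X k then ((⟨p.1, h.1⟩ : {x // x ∈ X k}), (⟨p.2, h.2⟩ : {x // x ∈ X k}))
            else ((⟨u₀, hu0X⟩ : {x // x ∈ X k}), (⟨u₀, hu0X⟩ : {x // x ∈ X k})))
        · intro p hp
          simp only [Finset.mem_coe, mem_cutFinset] at hp
          obtain ⟨hE, h1, h2⟩ := hp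
          have hcl := hclass p.1 p.2 hE h1 h2
          have hm : p.1 ∈ X k ∧ p.2 ∈ X k := ⟨(hX k p.1).2 hcl.1, (hX k p.2).2 hcl.2⟩
          simp only [Finset.mem_coe]
          rw [dif_pos hm, mem_cutFinset]
          refine ⟨hE, ?_, (hiff ⟨p.2, hm.2⟩).1 h2⟩
          exact le_of_not_gt fun hlt => absurd ((hiff ⟨p.1, hm.1⟩).2 hlt) (not_lt.2 h1)
        · intro p hp q hq hpq
          simp only [Finset.mem_coe, mem_cutFinset] at hp hq
          dsimp only at hpq
          have hclp := hclass p.1 p.2 hp.1 hp.2.1 hp.2.2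
          have hclq := hclass q.1 q.2 hq.1 hq.2.1 hq.2.2
          have hmp : p.1 ∈ X k ∧ p.2 ∈ X k := ⟨(hX k p.1).2 hclp.1, (hX k p.2).2 hclp.2⟩
          have hmq : q.1 ∈ X k ∧ q.2 ∈ X k := ⟨(hX k q.1).2 hclq.1, (hX k q.2).2 hclq.2⟩
          rw [dif_pos hmp, dif_pos hmq] at hpq
          have e1 : p.1 = q.1 := congrArg (fun x : {x // x ∈ X k} × {x // x ∈ X k} => x.1.1) hpq
          have e2 : p.2 = q.2 := congrArg (fun x : {x // x ∈ X k} × {x // x ∈ X k} => x.2.1) hpq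
          exact Prod.ext e1 e2
      refine le_trans hcut (le_trans (Finset.le_sup (Finset.mem_range.2 (by omega)))
        (le_trans (le_of_eq (hσ k)) (Finset.le_sup (f := fun i : Fin t => cutwidthOn E (X i)) (Finset.mem_univ k))))
  exact le_trans (Nat.sInf_le ⟨π, rfl⟩) hwidth

/-- If a semi-complete digraph `D*` is partitioned into classes
`f⁻¹(1), …, f⁻¹(t)` so that all arcs between distinct classes go from the smaller-indexed
class to the larger-indexed one (i.e. `D*` is the ordered sum of the semi-complete digraphs
induced by the classes), then `ctw(D*)` is the maximum of the cutwidths of the classes;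
in particular `ctw(D*) ≤ c` iff every class has cutwidth at most `c`. -/
theorem cutwidth_ordered_sum (t : ℕ) (E : V → V → Prop) [DecidableRel E]
    (hirr : ∀ v : V, ¬ E v v)
    (hsc : ∀ u v : V, u ≠ v → E u v ∨ E v u)
    (f : V → Fin t)
    (hcross : ∀ u v : V, f u < f v → E u v ∧ ¬ E v u) :
    cutwidth E =
      Finset.univ.sup (fun i : Fin t =>
        cutwidthOn E (Finset.univ.filter (fun v => f v = i))) ∧
    ∀ c : ℕ, (cutwidth E ≤ c ↔
      ∀ i : Fin t, cutwidthOn E (Finset.univ.filter (fun v => f v = i)) ≤ c) := by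
  classical
  have h1 : cutwidth E =
      Finset.univ.sup (fun i : Fin t =>
        cutwidthOn E (Finset.univ.filter (fun v => f v = i))) := by
    apply le_antisymm
    · exact cutwidth_le_sup E f (fun u v h => (hcross u v h).2)
        (fun i => Finset.univ.filter (fun v => f v = i)) (fun i v => by simp)
    · apply Finset.sup_le
      intro i _
      obtain ⟨π, hπ⟩ : ∃ π : V ≃ Fin (Fintype.card V), widthOf E π = cutwidth E :=
        Nat.sInf_mem (s := {w | ∃ π : V ≃ Fin (Fintype.card V), widthOf E π = w})
          ⟨_, ⟨Fintype.equivFin V, rfl⟩⟩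
      rw [← hπ]
      exact cutwidthOn_le_widthOf E _ π
  refine ⟨h1, fun c => ?_⟩
  rw [h1]
  simp [Finset.sup_le_iff]
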